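/- For a prime power q, Δ(1,b) = 0 for all integers b with 1 ≤ b ≤ q-1, and consequently for any b ∈ Z_+, writing b = (q-1)σ + β with 0 < β ≤ q-1, one has Δ(1,b) = ∑_{i=0}^{σ-1} S_1(b - ((q-1) - 1 + i(q-1))), i.e., Δ(1,b) = ∑_{i=0}^{σ-1} S_1(b + 2 - (i+1)(q-1)). -/

import Mathlib

open Polynomial Finset

-- product of (X - C θ)
lemma aux_prod (F : Type) [Field F] [Fintype F] :
    ∏ θ : F, (X - C θ) = X ^ Fintype.card F - X := by
  classical
  set q := Fintype.card F with hq
  have hq2 : 1 < q := Fintype.one_lt_card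
  have hmonic : (X ^ q - X : F[X]).Monic := by
    apply monic_X_pow_sub
    simpa using (Nat.one_lt_cast.mpr hq2 : (1 : WithBot ℕ) < q)
  have hdeg : (X ^ q - X : F[X]).natDegree = q :=
    FiniteField.X_pow_card_sub_X_natDegree_eq F hq2
  have hroots : (X ^ q - X : F[X]).roots = Finset.univ.val :=
    FiniteField.roots_X_pow_card_sub_X F
  have hcard : Multiset.card (X ^ q - X : F[X]).roots = (X ^ q - X : F[X]).natDegree := by
    rw [hroots, hdeg]; simp [hq]
  have := prod_multiset_X_sub_C_of_monic_of_roots_card_eq hmonic hcard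
  rw [hroots] at this
  rw [← this, Finset.prod_eq_multiset_prod]

lemma aux_prod_add (F : Type) [Field F] [Fintype F] :
    ∏ θ : F, (X + C θ) = X ^ Fintype.card F - X := by
  rw [← aux_prod F]
  exact Fintype.prod_equiv (Equiv.neg F) _ _ (fun θ => by simp)

lemma aux_derivsum (F : Type) [Field F] [Fintype F] [DecidableEq F] :
    ∑ θ : F, ∏ θ' ∈ Finset.univ.erase θ, (X + C θ') = (-1 : F[X]) := by
  have h := congrArg derivative (aux_prod_add F)
  rw [Finset.prod_eq_multiset_prod, derivative_prod] at h
  have hL : (Multiset.map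
      (fun i => (Multiset.map (fun θ => X + C θ) (Finset.univ.val.erase i)).prod *
        derivative (X + C i)) Finset.univ.val).sum
      = ∑ θ : F, ∏ θ' ∈ Finset.univ.erase θ, (X + C θ') := by
    rw [Finset.sum_eq_multiset_sum]
    congr 1
    refine Multiset.map_congr rfl fun i _ => ?_
    rw [derivative_add, derivative_X, derivative_C, add_zero, mul_one,
      Finset.prod_eq_multiset_prod, Finset.erase_val]
  rw [hL] at h
  rw [h, derivative_sub, derivative_X_pow, derivative_X, Nat.cast_card_eq_zero F]
  simp

lemma aux_S1 (F : Type) [Field F] [Fintype F] :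
    ∑ θ : F, (RatFunc.X + RatFunc.C θ)⁻¹
      = (RatFunc.X - RatFunc.X ^ Fintype.card F)⁻¹ := by
  classical
  set q := Fintype.card F with hq
  set A := algebraMap F[X] (RatFunc F) with hA
  have hu : ∀ θ : F, RatFunc.X + RatFunc.C θ = A (X + C θ) := by
    intro θ; rw [map_add, RatFunc.algebraMap_X, RatFunc.algebraMap_C]
  have huz : ∀ θ : F, A (X + C θ) ≠ 0 := fun θ =>
    RatFunc.algebraMap_ne_zero (X_add_C_ne_zero θ)
  have hPz : A (X ^ q - X) ≠ 0 :=
    RatFunc.algebraMap_ne_zero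
      (FiniteField.X_pow_card_sub_X_ne_zero F Fintype.one_lt_card)
  have key : ∀ θ : F, (A (X + C θ))⁻¹
      = A (∏ θ' ∈ Finset.univ.erase θ, (X + C θ')) * (A (X ^ q - X))⁻¹ := by
    intro θ
    have hPe : A (X ^ q - X)
        = A (X + C θ) * A (∏ θ' ∈ Finset.univ.erase θ, (X + C θ')) := by
      rw [← map_mul]; congr 1
      rw [← aux_prod_add F]
      exact (Finset.mul_prod_erase _ _ (Finset.mem_univ θ)).symm
    have hprodz : A (∏ θ' ∈ Finset.univ.erase θ, (X + C θ')) ≠ 0 :=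
      RatFunc.algebraMap_ne_zero
        (Finset.prod_ne_zero_iff.mpr fun a _ => X_add_C_ne_zero a)
    rw [hPe, mul_inv, mul_comm ((A (X + C θ))⁻¹), ← mul_assoc,
      mul_inv_cancel₀ hprodz, one_mul]
  calc ∑ θ : F, (RatFunc.X + RatFunc.C θ)⁻¹
      = ∑ θ : F, A (∏ θ' ∈ Finset.univ.erase θ, (X + C θ')) * (A (X ^ q - X))⁻¹ := by
        refine Finset.sum_congr rfl fun θ _ => ?_; rw [hu θ, key θ]
    _ = A (∑ θ : F, ∏ θ' ∈ Finset.univ.erase θ, (X + C θ')) * (A (X ^ q - X))⁻¹ := by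
        rw [← Finset.sum_mul, map_sum]
    _ = (RatFunc.X - RatFunc.X ^ q)⁻¹ := by
        rw [aux_derivsum F, map_neg, map_one, map_sub, map_pow, RatFunc.algebraMap_X,
          neg_mul, one_mul, ← inv_neg, neg_sub]

lemma aux_sum_pow_poly (F : Type) [Field F] [Fintype F] {m : ℕ}
    (hm : m < Fintype.card F - 1) :
    ∑ η : F, (X + C η : F[X]) ^ m = 0 := by
  classical
  have expand : ∀ η : F, (X + C η : F[X]) ^ m
      = ∑ k ∈ Finset.range (m + 1), X ^ k * C η ^ (m - k) * (m.choose k : F[X]) :=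
    fun η => add_pow X (C η) m
  rw [Finset.sum_congr rfl fun η _ => expand η, Finset.sum_comm]
  refine Finset.sum_eq_zero fun k hk => ?_
  have : ∑ η : F, X ^ k * C η ^ (m - k) * (m.choose k : F[X])
      = X ^ k * C (∑ η : F, η ^ (m - k)) * (m.choose k : F[X]) := by
    rw [map_sum, Finset.mul_sum, Finset.sum_mul]
    exact Finset.sum_congr rfl fun η _ => by rw [C_pow]
  rw [this, FiniteField.sum_pow_lt_card_sub_one F (m - k) (lt_of_le_of_lt (Nat.sub_le m k) hm),
    C_0, mul_zero, zero_mul]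

lemma aux_sum_pow (F : Type) [Field F] [Fintype F] {m : ℕ}
    (hm : m < Fintype.card F - 1) :
    ∑ η : F, (RatFunc.X + RatFunc.C η) ^ m = 0 := by
  have h := congrArg (algebraMap F[X] (RatFunc F)) (aux_sum_pow_poly F hm)
  rw [map_sum, map_zero] at h
  rw [← h]
  refine Finset.sum_congr rfl fun η _ => ?_
  rw [map_pow, map_add, RatFunc.algebraMap_X, RatFunc.algebraMap_C]

lemma aux_frob (F : Type) [Field F] [Fintype F] (p s : ℕ) (hp : p.Prime)
    (hs : s ≠ 0) (hcard : Fintype.card F = p ^ s) (η : F) :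
    (RatFunc.X + RatFunc.C η) ^ Fintype.card F
      = RatFunc.X ^ Fintype.card F + RatFunc.C η := by
  haveI : Fact p.Prime := ⟨hp⟩
  have hpF : (p : F) = 0 := by
    have h := Nat.cast_card_eq_zero F
    rw [hcard, Nat.cast_pow] at h
    exact (pow_eq_zero_iff hs).mp h
  haveI : CharP F p := (CharP.ringChar_of_prime_eq_zero hp hpF) ▸ ringChar.charP F
  haveI : CharP (RatFunc F) p :=
    charP_of_injective_algebraMap (algebraMap F (RatFunc F)).injective p
  rw [hcard, add_pow_char_pow, ← map_pow, ← hcard, FiniteField.pow_card]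

lemma aux_une (F : Type) [Field F] [Fintype F] (η : F) :
    RatFunc.X + RatFunc.C η ≠ 0 := by
  have : RatFunc.X + RatFunc.C η = algebraMap F[X] (RatFunc F) (X + C η) := by
    rw [map_add, RatFunc.algebraMap_X, RatFunc.algebraMap_C]
  rw [this]
  exact RatFunc.algebraMap_ne_zero (X_add_C_ne_zero η)

lemma aux_dne (F : Type) [Field F] [Fintype F] :
    (RatFunc.X : RatFunc F) - RatFunc.X ^ Fintype.card F ≠ 0 := by
  have : (RatFunc.X : RatFunc F) - RatFunc.X ^ Fintype.card F
      = -(algebraMap F[X] (RatFunc F) (X ^ Fintype.card F - X)) := by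
    rw [map_sub, map_pow, RatFunc.algebraMap_X, neg_sub]
  rw [this, neg_ne_zero]
  exact RatFunc.algebraMap_ne_zero
    (FiniteField.X_pow_card_sub_X_ne_zero F Fintype.one_lt_card)

lemma aux_L (F : Type) [Field F] [Fintype F] (p s : ℕ) (hp : p.Prime)
    (hs : s ≠ 0) (hcard : Fintype.card F = p ^ s) (η : F) :
    (RatFunc.X + RatFunc.C η) ^ (Fintype.card F - 1)
        * (RatFunc.X - RatFunc.X ^ Fintype.card F)⁻¹
      = (RatFunc.X - RatFunc.X ^ Fintype.card F)⁻¹ - (RatFunc.X + RatFunc.C η)⁻¹ := by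
  have hu := aux_une F η
  have hd := aux_dne F
  have hfr := aux_frob F p s hp hs hcard η
  have hq1 : Fintype.card F - 1 + 1 = Fintype.card F :=
    Nat.succ_pred_eq_of_pos Fintype.card_pos
  have hpow : (RatFunc.X + RatFunc.C η) ^ (Fintype.card F - 1) * (RatFunc.X + RatFunc.C η)
      = RatFunc.X ^ Fintype.card F + RatFunc.C η := by
    rw [← pow_succ, hq1, hfr]
  field_simp
  linear_combination hpow

lemma aux_core (F : Type) [Field F] [Fintype F] (p s : ℕ) (hp : p.Prime)
    (hs : s ≠ 0) (hcard : Fintype.card F = p ^ s) (b : ℕ) :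
    (∑ θ : F, (RatFunc.X + RatFunc.C θ)⁻¹)
        * (∑ η : F, ((RatFunc.X + RatFunc.C η) ^ b)⁻¹)
      - ∑ η : F, ((RatFunc.X + RatFunc.C η) ^ (1 + b))⁻¹
    = ∑ η : F, ((RatFunc.X + RatFunc.C η) ^ b)⁻¹
        * (RatFunc.X + RatFunc.C η) ^ (Fintype.card F - 1)
        * (RatFunc.X - RatFunc.X ^ Fintype.card F)⁻¹ := by
  rw [aux_S1 F, Finset.mul_sum, ← Finset.sum_sub_distrib]
  refine Finset.sum_congr rfl fun η _ => ?_
  rw [pow_add, pow_one, mul_inv, mul_assoc, aux_L F p s hp hs hcard η]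
  ring

lemma aux_main1 (F : Type) [Field F] [Fintype F] (p s : ℕ) (hp : p.Prime)
    (hs : s ≠ 0) (hcard : Fintype.card F = p ^ s) (b : ℕ)
    (hb1 : 1 ≤ b) (hb2 : b ≤ Fintype.card F - 1) :
    (∑ θ : F, (RatFunc.X + RatFunc.C θ)⁻¹)
        * (∑ η : F, ((RatFunc.X + RatFunc.C η) ^ b)⁻¹)
      - ∑ η : F, ((RatFunc.X + RatFunc.C η) ^ (1 + b))⁻¹ = 0 := by
  rw [aux_core F p s hp hs hcard b]
  have hterm : ∀ η : F, ((RatFunc.X + RatFunc.C η) ^ b)⁻¹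
      * (RatFunc.X + RatFunc.C η) ^ (Fintype.card F - 1)
      = (RatFunc.X + RatFunc.C η) ^ (Fintype.card F - 1 - b) := by
    intro η
    have hsplit : (RatFunc.X + RatFunc.C η) ^ (Fintype.card F - 1)
        = (RatFunc.X + RatFunc.C η) ^ (Fintype.card F - 1 - b)
          * (RatFunc.X + RatFunc.C η) ^ b := by
      rw [← pow_add, Nat.sub_add_cancel hb2]
    rw [hsplit, mul_comm ((RatFunc.X + RatFunc.C η) ^ (Fintype.card F - 1 - b)),
      inv_mul_cancel_left₀ (pow_ne_zero b (aux_une F η))]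
  calc ∑ η : F, ((RatFunc.X + RatFunc.C η) ^ b)⁻¹
        * (RatFunc.X + RatFunc.C η) ^ (Fintype.card F - 1)
        * (RatFunc.X - RatFunc.X ^ Fintype.card F)⁻¹
      = (∑ η : F, (RatFunc.X + RatFunc.C η) ^ (Fintype.card F - 1 - b))
          * (RatFunc.X - RatFunc.X ^ Fintype.card F)⁻¹ := by
        rw [Finset.sum_mul]
        exact Finset.sum_congr rfl fun η _ => by rw [hterm η]
    _ = 0 := by
        rw [aux_sum_pow F (by
          have : 1 < Fintype.card F := Fintype.one_lt_card
          omega), zero_mul]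

lemma aux_main2 (F : Type) [Field F] [Fintype F] (p s : ℕ) (hp : p.Prime)
    (hs : s ≠ 0) (hcard : Fintype.card F = p ^ s) (b : ℕ)
    (hb : Fintype.card F ≤ b) :
    (∑ θ : F, (RatFunc.X + RatFunc.C θ)⁻¹)
        * (∑ η : F, ((RatFunc.X + RatFunc.C η) ^ b)⁻¹)
      - ∑ η : F, ((RatFunc.X + RatFunc.C η) ^ (1 + b))⁻¹
    = (∑ θ : F, (RatFunc.X + RatFunc.C θ)⁻¹)
        * (∑ η : F, ((RatFunc.X + RatFunc.C η) ^ (b - (Fintype.card F - 1)))⁻¹) := by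
  rw [aux_core F p s hp hs hcard b, aux_S1 F, Finset.mul_sum]
  refine Finset.sum_congr rfl fun η _ => ?_
  have hsplit : (RatFunc.X + RatFunc.C η) ^ b
      = (RatFunc.X + RatFunc.C η) ^ (b - (Fintype.card F - 1))
        * (RatFunc.X + RatFunc.C η) ^ (Fintype.card F - 1) := by
    rw [← pow_add]
    congr 1
    have : 1 < Fintype.card F := Fintype.one_lt_card
    omega
  have h3 := aux_dne F
  have h2 := pow_ne_zero (Fintype.card F - 1) (aux_une F η)
  have h1 := pow_ne_zero (b - (Fintype.card F - 1)) (aux_une F η)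
  rw [hsplit, mul_inv]
  field_simp

/-- `Δ(1,b) = 0` for `1 ≤ b ≤ q-1`, and for `b = (q-1)σ + β` with
`0 < β ≤ q-1`, `Δ(1,b) = ∑_{i=0}^{σ-1} S_1(b + 1 - (i+1)(q-1))`. -/
theorem stmt_9 (p s q : ℕ) (hp : p.Prime) (hs : 0 < s) (hq : q = p ^ s)
    {F : Type} [Field F] [Fintype F] (hF : Fintype.card F = q)
    (S1 : ℕ → RatFunc F)
    (hS1 : ∀ k, S1 k = ∑ θ : F, ((RatFunc.X + RatFunc.C θ) ^ k)⁻¹)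
    (Δ : ℕ → ℕ → RatFunc F)
    (hΔ : ∀ a b, Δ a b = S1 a * S1 b - S1 (a + b)) :
    (∀ b, 1 ≤ b → b ≤ q - 1 → Δ 1 b = 0) ∧
    (∀ b σ β, b = (q - 1) * σ + β → 0 < β → β ≤ q - 1 →
      Δ 1 b = ∑ i ∈ Finset.range σ, S1 (b + 1 - (i + 1) * (q - 1))) := by
  have hcard : Fintype.card F = p ^ s := by rw [hF, hq]
  have hq2 : 2 ≤ q := by
    rw [hq]; exact Nat.one_lt_pow hs.ne' hp.one_lt
  have part1 : ∀ b, 1 ≤ b → b ≤ q - 1 → Δ 1 b = 0 := by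
    intro b hb1 hb2
    rw [hΔ, hS1 1, hS1 b, hS1 (1 + b)]
    simp only [pow_one]
    exact aux_main1 F p s hp hs.ne' hcard b hb1 (by rw [hF]; exact hb2)
  have key2 : ∀ b, q ≤ b → Δ 1 b = S1 1 * S1 (b - (q - 1)) := by
    intro b hb
    rw [hΔ, hS1 1, hS1 b, hS1 (1 + b), hS1 (b - (q - 1))]
    simp only [pow_one]
    have h := aux_main2 F p s hp hs.ne' hcard b (by rw [hF]; exact hb)
    rw [hF] at h
    exact h
  refine ⟨part1, ?_⟩
  intro b σ β hbe hβ1 hβ2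
  induction σ generalizing b with
  | zero =>
      rw [Finset.range_zero, Finset.sum_empty]
      exact part1 b (by omega) (by omega)
  | succ σ ih =>
      obtain ⟨m, hm⟩ : ∃ m, m = (q - 1) * σ := ⟨_, rfl⟩
      have hexp : (q - 1) * (σ + 1) = (q - 1) * σ + (q - 1) := by ring
      have hbe' : b = m + (q - 1) + β := by rw [hbe, hexp, ← hm]
      have hble : q ≤ b := by omega
      set b' := b - (q - 1) with hb'
      have hb'm : b' = m + β := by omega
      have hb'e : b' = (q - 1) * σ + β := by rw [hb'm, hm]
      have ihb := ih b' hb'e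
      rw [key2 b hble]
      have hsplit : S1 1 * S1 b' = Δ 1 b' + S1 (1 + b') := by rw [hΔ]; ring
      rw [hsplit, ihb, Finset.sum_range_succ']
      congr 1
      · refine Finset.sum_congr rfl fun i _ => ?_
        congr 1
        have e1 : b + 1 = (b' + 1) + (q - 1) := by omega
        have e2 : (i + 1 + 1) * (q - 1) = (i + 1) * (q - 1) + (q - 1) := by ring
        rw [e1, e2, Nat.add_sub_add_right]
      · congr 1
        simp only [zero_add, one_mul]
        omega
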